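/- Let V be a finite set of points in ℝ² contained in the closed annulus {x : 2 ≤ ‖x‖ ≤ 2.52}, with ‖u - v‖ ≥ 2 for all distinct u, v ∈ V. Then V has cardinality at most 7. -/

import Mathlib

lemma euc_norm_sq (v : EuclideanSpace ℝ (Fin 2)) : ‖v‖ ^ 2 = v 0 ^ 2 + v 1 ^ 2 := by
  rw [EuclideanSpace.norm_eq, Real.sq_sqrt (by positivity)]
  simp [Fin.sum_univ_two, sq_abs]

lemma euc_abs_eq (v : EuclideanSpace ℝ (Fin 2)) : ‖(⟨v 0, v 1⟩ : ℂ)‖ = ‖v‖ := by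
  rw [Complex.norm_def, Complex.normSq_mk, EuclideanSpace.norm_eq]
  congr 1
  simp [Fin.sum_univ_two, sq_abs]
  ring

lemma cos_arg_sub_le (u v : EuclideanSpace ℝ (Fin 2))
    (hu1 : 2 ≤ ‖u‖) (hu2 : ‖u‖ ≤ 2.52) (hv1 : 2 ≤ ‖v‖) (hv2 : ‖v‖ ≤ 2.52)
    (hd : 2 ≤ ‖u - v‖) :
    Real.cos (Complex.arg ⟨u 0, u 1⟩ - Complex.arg ⟨v 0, v 1⟩) ≤ 0.686 := by
  have hzu : (⟨u 0, u 1⟩ : ℂ) ≠ 0 := by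
    intro h
    have : ‖(⟨u 0, u 1⟩ : ℂ)‖ = 0 := by rw [h]; simp
    rw [euc_abs_eq] at this
    linarith
  have hzv : (⟨v 0, v 1⟩ : ℂ) ≠ 0 := by
    intro h
    have : ‖(⟨v 0, v 1⟩ : ℂ)‖ = 0 := by rw [h]; simp
    rw [euc_abs_eq] at this
    linarith
  rw [Real.cos_sub, Complex.cos_arg hzu, Complex.cos_arg hzv, Complex.sin_arg, Complex.sin_arg,
    euc_abs_eq, euc_abs_eq]
  simp only
  rw [div_mul_div_comm, div_mul_div_comm, ← add_div, div_le_iff₀ (by positivity)]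
  have hU := euc_norm_sq u
  have hV := euc_norm_sq v
  have hD : ‖u - v‖ ^ 2 = (u 0 - v 0) ^ 2 + (u 1 - v 1) ^ 2 := by
    have := euc_norm_sq (u - v)
    simpa using this
  have hD4 : (4 : ℝ) ≤ (u 0 - v 0) ^ 2 + (u 1 - v 1) ^ 2 := by
    rw [← hD]
    nlinarith [norm_nonneg (u - v)]
  nlinarith [mul_nonneg (sub_nonneg.2 hu2) (sub_nonneg.2 hu1),
    mul_nonneg (sub_nonneg.2 hv2) (sub_nonneg.2 hv1),
    mul_nonneg (sub_nonneg.2 hu2) (sub_nonneg.2 hv2),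
    mul_nonneg (sub_nonneg.2 hu1) (sub_nonneg.2 hv1)]

theorem annulus_packing_card_le_seven (V : Finset (EuclideanSpace ℝ (Fin 2)))
    (hann : ∀ v ∈ V, 2 ≤ ‖v‖ ∧ ‖v‖ ≤ 2.52)
    (hsep : ∀ u ∈ V, ∀ v ∈ V, u ≠ v → 2 ≤ ‖u - v‖) :
    V.card ≤ 7 := by
  classical
  by_contra hcard
  push_neg at hcard
  obtain ⟨v0, hv0⟩ := Finset.card_pos.mp (by omega : 0 < V.card)
  have hp : (0:ℝ) < 2 * Real.pi := by positivity
  set a : EuclideanSpace ℝ (Fin 2) → ℝ := fun v => Complex.arg ⟨v 0, v 1⟩ with ha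
  set φ : EuclideanSpace ℝ (Fin 2) → ℝ := fun v => toIcoMod hp 0 (a v - a v0) with hφdef
  have hmod : ∀ v, ∃ k : ℤ, a v - a v0 - φ v = k * (2 * Real.pi) := by
    intro v
    refine ⟨toIcoDiv hp 0 (a v - a v0), ?_⟩
    have h := self_sub_toIcoMod hp 0 (a v - a v0)
    rw [zsmul_eq_mul] at h
    simp only [hφdef]
    exact h
  have hφmem : ∀ v, 0 ≤ φ v ∧ φ v < 2 * Real.pi := fun v => toIcoMod_mem_Ico' hp _
  have hπ1 : Real.pi < 3.15 := by
    have := Real.pi_lt_d2; linarith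
  have hcos : ∀ u ∈ V, ∀ v ∈ V, u ≠ v → Real.cos (a u - a v) ≤ 0.686 := by
    intro u hu v hv huv
    exact cos_arg_sub_le u v (hann u hu).1 (hann u hu).2 (hann v hv).1 (hann v hv).2
      (hsep u hu v hv huv)
  have hφbound : ∀ v ∈ V, v ≠ v0 → 0.79 < φ v ∧ φ v < 2 * Real.pi - 0.79 := by
    intro v hv hne
    have h1 : Real.cos (φ v) ≤ 0.686 := by
      obtain ⟨k, hk⟩ := hmod v
      have heq : φ v = (a v - a v0) + (-k : ℤ) * (2 * Real.pi) := by push_cast; linarith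
      rw [heq, Real.cos_add_int_mul_two_pi]
      exact hcos v hv v0 hv0 hne
    obtain ⟨h0, h2π⟩ := hφmem v
    constructor
    · by_contra hle
      push_neg at hle
      have := Real.one_sub_sq_div_two_le_cos (x := φ v)
      nlinarith
    · by_contra hge
      push_neg at hge
      have hcos2 : Real.cos (φ v) = Real.cos (2 * Real.pi - φ v) := (Real.cos_two_pi_sub _).symm
      have := Real.one_sub_sq_div_two_le_cos (x := 2 * Real.pi - φ v)
      nlinarith
  have hmaps : ∀ v ∈ V.erase v0, ⌊φ v / 0.79⌋₊ ∈ Finset.Icc 1 6 := by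
    intro v hv
    obtain ⟨hvne, hvV⟩ := Finset.mem_erase.mp hv
    obtain ⟨hb1, hb2⟩ := hφbound v hvV hvne
    rw [Finset.mem_Icc]
    constructor
    · exact Nat.le_floor (by push_cast; rw [le_div_iff₀ (by norm_num)]; linarith)
    · have h7 : φ v / 0.79 < 7 := by rw [div_lt_iff₀ (by norm_num)]; linarith
      have := (Nat.floor_lt (by positivity : (0:ℝ) ≤ φ v / 0.79)).mpr
        (show φ v / 0.79 < ((7:ℕ):ℝ) by push_cast; linarith)
      omega
  have hlt : (Finset.Icc 1 6).card < (V.erase v0).card := by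
    rw [Finset.card_erase_of_mem hv0, Nat.card_Icc]
    omega
  obtain ⟨x, hx, y, hy, hxy, hfeq⟩ := Finset.exists_ne_map_eq_of_card_lt_of_maps_to hlt hmaps
  obtain ⟨hxne, hxV⟩ := Finset.mem_erase.mp hx
  obtain ⟨hyne, hyV⟩ := Finset.mem_erase.mp hy
  -- from equal floors, |φ x - φ y| < 0.79
  have hx0 : (0:ℝ) ≤ φ x := (hφmem x).1
  have hy0 : (0:ℝ) ≤ φ y := (hφmem y).1
  have hx1 : ((⌊φ x / 0.79⌋₊ : ℕ) : ℝ) * 0.79 ≤ φ x := by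
    rw [← le_div_iff₀ (by norm_num : (0:ℝ) < 0.79)]
    exact Nat.floor_le (by positivity)
  have hx2 : φ x < (((⌊φ x / 0.79⌋₊ : ℕ) : ℝ) + 1) * 0.79 := by
    rw [← div_lt_iff₀ (by norm_num : (0:ℝ) < 0.79)]
    exact_mod_cast Nat.lt_floor_add_one (φ x / 0.79)
  have hy1 : ((⌊φ y / 0.79⌋₊ : ℕ) : ℝ) * 0.79 ≤ φ y := by
    rw [← le_div_iff₀ (by norm_num : (0:ℝ) < 0.79)]
    exact Nat.floor_le (by positivity)
  have hy2 : φ y < (((⌊φ y / 0.79⌋₊ : ℕ) : ℝ) + 1) * 0.79 := by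
    rw [← div_lt_iff₀ (by norm_num : (0:ℝ) < 0.79)]
    exact_mod_cast Nat.lt_floor_add_one (φ y / 0.79)
  have hcast : ((⌊φ x / 0.79⌋₊ : ℕ) : ℝ) = ((⌊φ y / 0.79⌋₊ : ℕ) : ℝ) := by exact_mod_cast hfeq
  have hsq : (φ x - φ y) ^ 2 < 0.79 ^ 2 := by nlinarith
  have hcosxy : Real.cos (a x - a y) ≤ 0.686 := hcos x hxV y hyV hxy
  obtain ⟨kx, hkx⟩ := hmod x
  obtain ⟨ky, hky⟩ := hmod y
  have heq : a x - a y = (φ x - φ y) + ((kx - ky : ℤ) : ℝ) * (2 * Real.pi) := by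
    push_cast; linarith
  rw [heq, Real.cos_add_int_mul_two_pi] at hcosxy
  have := Real.one_sub_sq_div_two_le_cos (x := φ x - φ y)
  nlinarith
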